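/- Let k be a field, K a field extension of k, h a natural number, and x₀ ∈ K an element algebraic over k whose minimal polynomial has degree 2h+1 and which generates K over k (i.e. K = k(x₀), the intermediate field generated by x₀ is all of K). Then for every y ∈ K there exist polynomials a, b ∈ k[X] with deg a ≤ h, deg b ≤ h, b ≠ 0, and y·b(x₀) = a(x₀); equivalently, y = a(x₀)/b(x₀). -/

import Mathlib

open Polynomial IntermediateField Module

/-- If `x₀ ∈ K` is algebraic over `k`, with minimal polynomial of degree `2h+1`,
and `K = k(x₀)`, then every `y ∈ K` can be written as `a(x₀)/b(x₀)` with
`a, b ∈ k[X]` of degree `≤ h` and `b ≠ 0`. -/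
theorem stmt_5 {k K : Type*} [Field k] [Field K] [Algebra k K]
    (h : ℕ) (x₀ : K) (halg : IsAlgebraic k x₀)
    (hdeg : (minpoly k x₀).natDegree = 2 * h + 1)
    (hgen : IntermediateField.adjoin k {x₀} = ⊤) :
    ∀ y : K, ∃ a b : Polynomial k,
      a.natDegree ≤ h ∧ b.natDegree ≤ h ∧ b ≠ 0 ∧
      y * Polynomial.aeval x₀ b = Polynomial.aeval x₀ a := by
  intro y
  have hint := halg.isIntegral
  have hFD : FiniteDimensional k K := by
    have : FiniteDimensional k (adjoin k {x₀}) := adjoin.finiteDimensional hint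
    rw [hgen] at this
    exact (IntermediateField.topEquiv (F := k) (E := K)).toLinearEquiv.finiteDimensional
  have hfr : finrank k K = 2 * h + 1 := by
    rw [← hdeg, ← adjoin.finrank hint, hgen, finrank_top']
  -- evaluation linear map
  let ev : Polynomial k →ₗ[k] K := (Polynomial.aeval x₀).toLinearMap
  let V := (degreeLT k (h+1)) × (degreeLT k (h+1))
  let φ : V →ₗ[k] K :=
    (ev.comp ((degreeLT k (h+1)).subtype.comp (LinearMap.fst k _ _))) -
      y • (ev.comp ((degreeLT k (h+1)).subtype.comp (LinearMap.snd k _ _)))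
  have hfin : Module.Finite k (degreeLT k (h+1)) :=
    Module.Finite.equiv (Polynomial.degreeLTEquiv k (h+1)).symm
  have hdimV : finrank k V = 2 * h + 2 := by
    have : finrank k (degreeLT k (h+1)) = h + 1 := by
      rw [(Polynomial.degreeLTEquiv k (h+1)).finrank_eq]
      simp
    rw [Module.finrank_prod, this]; ring
  have hni : ¬ Function.Injective φ := by
    intro hinj
    have := LinearMap.finrank_le_finrank_of_injective hinj
    omega
  rw [← LinearMap.ker_eq_bot] at hni
  obtain ⟨v, hv, hv0⟩ := Submodule.exists_mem_ne_zero_of_ne_bot hni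
  obtain ⟨⟨a, ha⟩, ⟨b, hb⟩⟩ := v
  have hkey : Polynomial.aeval x₀ a - y * Polynomial.aeval x₀ b = 0 := by
    rw [sub_eq_zero]
    simp [φ, ev, sub_eq_zero] at hv
    exact hv
  have hdegle : ∀ p : Polynomial k, p ∈ degreeLT k (h+1) → p.natDegree ≤ h := by
    intro p hp
    rcases eq_or_ne p 0 with rfl | hp0
    · simp
    · have := (Polynomial.mem_degreeLT.mp hp)
      have := Polynomial.natDegree_lt_iff_degree_lt hp0 |>.mpr (by exact_mod_cast this)
      omega
  have hb0 : b ≠ 0 := by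
    intro hb'
    subst hb'
    have ha0 : a = 0 := by
      by_contra ha0
      have hlt : a.natDegree < (minpoly k x₀).natDegree := by
        have := hdegle a ha; omega
      have haev : Polynomial.aeval x₀ a = 0 := by simpa using hkey
      have := Polynomial.natDegree_le_natDegree
        (minpoly.degree_le_of_ne_zero k x₀ ha0 haev)
      omega
    apply hv0
    subst ha0
    rfl
  refine ⟨a, b, hdegle a ha, hdegle b hb, hb0, ?_⟩
  exact (sub_eq_zero.mp hkey).symm
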